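/- Let α, β > -1, set λ = α + β + 1, and let r ≠ k be nonnegative integers. Suppose P and Q are real polynomials satisfying, for all t ∈ (-1,1), the Jacobi differential equations d/dt[(1-t)^{α+1}(1+t)^{β+1} P'(t)] + r(r+λ)(1-t)^α(1+t)^β P(t) = 0 and d/dt[(1-t)^{α+1}(1+t)^{β+1} Q'(t)] + k(k+λ)(1-t)^α(1+t)^β Q(t) = 0. Let ξ ∈ (-1,1) with P'(ξ) = 0. Then ∫_ξ^1 P(t) Q(t) (1-t)^α (1+t)^β dt = (1-ξ)^{α+1}(1+ξ)^{β+1} P(ξ) Q'(ξ) / ((k-r)(k+r+λ)). -/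

import Mathlib

open MeasureTheory Polynomial

/-- **Green's-formula identity for a pair of Jacobi differential equation solutions.**
If `P`, `Q` solve the Jacobi equations with parameters `r(r+λ)` and `k(k+λ)` (`r ≠ k`),
and `P'(ξ) = 0` for a point `ξ ∈ (-1,1)`, then
`∫_ξ^1 P Q (1-t)^α(1+t)^β dt = (1-ξ)^{α+1}(1+ξ)^{β+1} P(ξ) Q'(ξ) / ((k-r)(k+r+λ))`. -/
theorem jacobi_pair_green_identity
    (α β : ℝ) (hα : -1 < α) (hβ : -1 < β) (lam : ℝ) (hlam : lam = α + β + 1)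
    (r k : ℕ) (hrk : r ≠ k)
    (P Q : Polynomial ℝ)
    (hP : ∀ t ∈ Set.Ioo (-1:ℝ) 1, HasDerivAt
      (fun s : ℝ => (1 - s) ^ (α + 1) * (1 + s) ^ (β + 1) * (derivative P).eval s)
      (-((r:ℝ) * ((r:ℝ) + lam)) * (1 - t) ^ α * (1 + t) ^ β * P.eval t) t)
    (hQ : ∀ t ∈ Set.Ioo (-1:ℝ) 1, HasDerivAt
      (fun s : ℝ => (1 - s) ^ (α + 1) * (1 + s) ^ (β + 1) * (derivative Q).eval s)
      (-((k:ℝ) * ((k:ℝ) + lam)) * (1 - t) ^ α * (1 + t) ^ β * Q.eval t) t)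
    (ξ : ℝ) (hξ : ξ ∈ Set.Ioo (-1:ℝ) 1) (hPξ : (derivative P).eval ξ = 0) :
    ∫ t in ξ..1, P.eval t * Q.eval t * (1 - t) ^ α * (1 + t) ^ β
      = (1 - ξ) ^ (α + 1) * (1 + ξ) ^ (β + 1) * P.eval ξ * (derivative Q).eval ξ /
        (((k:ℝ) - (r:ℝ)) * ((k:ℝ) + (r:ℝ) + lam)) := by
  obtain ⟨hξm, hξ1⟩ := hξ
  have hξle : ξ ≤ 1 := hξ1.le
  -- the constant
  set c : ℝ := ((k:ℝ) - (r:ℝ)) * ((k:ℝ) + (r:ℝ) + lam) with hc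
  have hkr : (k:ℝ) - (r:ℝ) ≠ 0 := sub_ne_zero.2 (by exact_mod_cast (Ne.symm hrk))
  have hkr1 : (1:ℝ) ≤ (k:ℝ) + (r:ℝ) := by
    have h1 : 1 ≤ k + r := by omega
    exact_mod_cast h1
  have hsum : 0 < (k:ℝ) + (r:ℝ) + lam := by
    have : (-1:ℝ) < lam := by rw [hlam]; linarith
    linarith
  have hcne : c ≠ 0 := mul_ne_zero hkr (ne_of_gt hsum)
  -- the auxiliary function W (Wronskian-type)
  set W : ℝ → ℝ := fun t =>
      P.eval t * ((1 - t) ^ (α + 1) * (1 + t) ^ (β + 1) * (derivative Q).eval t)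
      - Q.eval t * ((1 - t) ^ (α + 1) * (1 + t) ^ (β + 1) * (derivative P).eval t)
    with hWdef
  set g : ℝ → ℝ := fun t => P.eval t * Q.eval t * (1 - t) ^ α * (1 + t) ^ β with hg
  -- derivative of W on (ξ, 1)
  have hWderiv : ∀ t ∈ Set.Ioo ξ 1, HasDerivAt W (-c * g t) t := by
    intro t ht
    have htm : t ∈ Set.Ioo (-1:ℝ) 1 := ⟨lt_trans hξm ht.1, ht.2⟩
    have h1 := (P.hasDerivAt t).mul (hQ t htm)
    have h2 := (Q.hasDerivAt t).mul (hP t htm)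
    have h3 := h1.sub h2
    refine h3.congr_deriv ?_
    simp only [hc, hg, hlam]
    ring
  -- continuity of W
  have hcontpow : ∀ q : ℝ, 0 ≤ q → Continuous (fun x : ℝ => x ^ q) := by
    intro q hq
    exact Real.continuous_rpow_const hq
  have hcont1 : Continuous (fun t : ℝ => (1 - t) ^ (α + 1)) :=
    (hcontpow (α + 1) (by linarith)).comp (continuous_const.sub continuous_id)
  have hcont2 : Continuous (fun t : ℝ => (1 + t) ^ (β + 1)) :=
    (hcontpow (β + 1) (by linarith)).comp (continuous_const.add continuous_id)
  have hWcont : Continuous W := by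
    apply Continuous.sub
    · exact P.continuous.mul ((hcont1.mul hcont2).mul (derivative Q).continuous)
    · exact Q.continuous.mul ((hcont1.mul hcont2).mul (derivative P).continuous)
  -- integrability of g on [ξ, 1]
  have hint1 : IntervalIntegrable (fun t : ℝ => (1 - t) ^ α) volume ξ 1 := by
    have h := (intervalIntegral.intervalIntegrable_rpow' (a := 1 - ξ) (b := 0) hα).comp_sub_left 1
    simpa using h
  have hcontrest : ContinuousOn (fun t : ℝ => P.eval t * Q.eval t * (1 + t) ^ β)
      (Set.uIcc ξ 1) := by
    apply ContinuousOn.mul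
    · exact (P.continuous.mul Q.continuous).continuousOn
    · apply ContinuousOn.rpow_const
      · exact (continuous_const.add continuous_id).continuousOn
      · intro x hx
        rw [Set.uIcc_of_le hξle] at hx
        left
        have := hx.1
        nlinarith [hξm]
  have hgint : IntervalIntegrable g volume ξ 1 := by
    have h := hint1.continuousOn_mul hcontrest
    apply h.congr
    intro t _
    simp only [hg]
    ring
  have hgint' : IntervalIntegrable (fun t => -c * g t) volume ξ 1 := by
    simpa using hgint.const_mul (-c)
  -- FTC
  have hFTC : ∫ t in ξ..1, (-c * g t) = W 1 - W ξ := by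
    apply intervalIntegral.integral_eq_sub_of_hasDeriv_right_of_le hξle
      hWcont.continuousOn
      (fun x hx => (hWderiv x hx).hasDerivWithinAt)
      hgint'
  have hW1 : W 1 = 0 := by
    have h0 : ((0:ℝ)) ^ (α + 1) = 0 := Real.zero_rpow (by linarith)
    simp [hWdef, h0]
  have hWξ : W ξ = (1 - ξ) ^ (α + 1) * (1 + ξ) ^ (β + 1) * P.eval ξ *
      (derivative Q).eval ξ := by
    simp only [hWdef, hPξ]
    ring
  rw [intervalIntegral.integral_const_mul] at hFTC
  have hgoal : ∫ t in ξ..1, g t =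
      ((1 - ξ) ^ (α + 1) * (1 + ξ) ^ (β + 1) * P.eval ξ * (derivative Q).eval ξ) / c := by
    rw [hW1, hWξ] at hFTC
    field_simp at hFTC ⊢
    linarith [hFTC]
  simpa [hg, hc] using hgoal
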